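/- Let C be a d-dimensional smooth combinatorial cube in ℝ^d with d ≥ 3, and let x, y, z ∈ {1,…,d} be distinct. Suppose the faces F_{xz} and F_{x z̄} are parallel, and the faces F_{yz} and F_{y z̄} are parallel. Then the facets F_z and F_{z̄} are parallel. -/

import Mathlib

open Pointwise

noncomputable section

/-- A point of `ℝ^d` is a *lattice point* if all its coordinates are integers. -/
def IsLatticePoint {d : ℕ} (x : Fin d → ℝ) : Prop :=
  ∀ i, ∃ n : ℤ, x i = (n : ℝ)

/-- A *polytope* is the convex hull of finitely many points. -/
def IsPolytope {E : Type*} [AddCommGroup E] [Module ℝ E] (P : Set E) : Prop :=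
  ∃ V : Finset E, P = convexHull ℝ (V : Set E)

/-- A *lattice polytope* in `ℝ^d` is the convex hull of finitely many lattice points. -/
def IsLatticePolytope {d : ℕ} (P : Set (Fin d → ℝ)) : Prop :=
  ∃ V : Finset (Fin d → ℝ), (∀ v ∈ V, IsLatticePoint v) ∧
    P = convexHull ℝ (V : Set (Fin d → ℝ))

/-- The subset of `P` on which the linear functional `u` is maximized. -/
def maxFace {E : Type*} [AddCommGroup E] [Module ℝ E] (P : Set E) (u : E →ₗ[ℝ] ℝ) : Set E :=
  {x ∈ P | ∀ y ∈ P, u y ≤ u x}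

/-- `F` is a face of `P` if it is the maximizing set of some linear functional on `P`. -/
def IsFaceOf {E : Type*} [AddCommGroup E] [Module ℝ E] (P F : Set E) : Prop :=
  ∃ u : E →ₗ[ℝ] ℝ, F = maxFace P u

/-- The dimension of a subset: the rank of the direction of its affine span. -/
def dimSet {E : Type*} [AddCommGroup E] [Module ℝ E] (F : Set E) : ℕ :=
  Module.finrank ℝ (affineSpan ℝ F).direction

/-- Two sets are parallel if the directions (linear parts) of their affine spans coincide. -/
def AreParallel {E : Type*} [AddCommGroup E] [Module ℝ E] (F G : Set E) : Prop :=
  (affineSpan ℝ F).direction = (affineSpan ℝ G).direction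

/-- A facet is a face of codimension one. -/
def IsFacetOf {E : Type*} [AddCommGroup E] [Module ℝ E] (P F : Set E) : Prop :=
  IsFaceOf P F ∧ dimSet F + 1 = dimSet P

/-- A vertex of `P` is a point whose singleton is a face of `P`. -/
def IsVertexOf {E : Type*} [AddCommGroup E] [Module ℝ E] (P : Set E) (v : E) : Prop :=
  IsFaceOf P {v}

/-- An edge of `P` is a one-dimensional face of `P`. -/
def IsEdgeOf {E : Type*} [AddCommGroup E] [Module ℝ E] (P F : Set E) : Prop :=
  IsFaceOf P F ∧ dimSet F = 1

/-- A polytope in `ℝ^d` is simple if every vertex is contained in exactly `d` edges. -/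
def IsSimplePolytope {d : ℕ} (P : Set (Fin d → ℝ)) : Prop :=
  ∀ v : Fin d → ℝ, IsVertexOf P v →
    {F : Set (Fin d → ℝ) | IsEdgeOf P F ∧ v ∈ F}.ncard = d

/-- An integer vector is primitive if it is not a nontrivial integer multiple of
another integer vector (in particular it is nonzero). -/
def IsPrimitiveVector {d : ℕ} (u : Fin d → ℤ) : Prop :=
  ∀ (k : ℤ) (w : Fin d → ℤ), u = k • w → IsUnit k

/-- `u` is a primitive edge direction of `P` at the vertex `v`: a primitive lattice vector
pointing from `v` along an edge of `P` incident to `v`. -/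
def IsPrimitiveEdgeDirectionAt {d : ℕ} (P : Set (Fin d → ℝ)) (v : Fin d → ℝ)
    (u : Fin d → ℤ) : Prop :=
  IsPrimitiveVector u ∧
    ∃ F : Set (Fin d → ℝ), IsEdgeOf P F ∧ v ∈ F ∧
      ∃ ε : ℝ, 0 < ε ∧ (v + ε • fun i => (u i : ℝ)) ∈ F

/-- A lattice polytope is smooth if it is simple and, at each vertex, the primitive
edge directions form a `ℤ`-basis of `ℤ^d`. -/
def IsSmoothPolytope {d : ℕ} (P : Set (Fin d → ℝ)) : Prop :=
  IsLatticePolytope P ∧ IsSimplePolytope P ∧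
    ∀ v : Fin d → ℝ, IsVertexOf P v →
      ∃ b : Module.Basis (Fin d) ℤ (Fin d → ℤ), ∀ i, IsPrimitiveEdgeDirectionAt P v (b i)

/-- The unit cube `[0,1]^d`. -/
def unitCube (d : ℕ) : Set (Fin d → ℝ) := {x | ∀ i, x i ∈ Set.Icc (0 : ℝ) 1}

/-- A `d`-dimensional combinatorial cube: a `d`-dimensional lattice polytope whose face
poset is order-isomorphic to the face poset of the unit cube `[0,1]^d`. -/
def IsCombinatorialCube (d : ℕ) (C : Set (Fin d → ℝ)) : Prop :=
  IsLatticePolytope C ∧ dimSet C = d ∧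
    Nonempty ({F : Set (Fin d → ℝ) // IsFaceOf (unitCube d) F} ≃o
              {F : Set (Fin d → ℝ) // IsFaceOf C F})

/-- The pair `(P, Q)` has the Integer Decomposition Property: every lattice point of the
Minkowski sum `P + Q` is a sum of a lattice point of `P` and a lattice point of `Q`. -/
def IsIDPPair {d : ℕ} (P Q : Set (Fin d → ℝ)) : Prop :=
  ∀ x : Fin d → ℝ, IsLatticePoint x → x ∈ P + Q →
    ∃ p ∈ P, ∃ q ∈ Q, IsLatticePoint p ∧ IsLatticePoint q ∧ x = p + q

/-- `P` and `Q` are Minkowski equivalent (have the same normal fan): two linear functionals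
are maximized on the same face of `P` if and only if they are maximized on the same face
of `Q`. -/
def MinkowskiEquivalent {E : Type*} [AddCommGroup E] [Module ℝ E] (P Q : Set E) : Prop :=
  ∀ u v : E →ₗ[ℝ] ℝ, maxFace P u = maxFace P v ↔ maxFace Q u = maxFace Q v

/-- `P` is a `d`-dimensional prismatoid with top facet `T` and bottom facet `B`: a
`d`-dimensional lattice polytope whose face poset is order-isomorphic to the face poset of
a prism `Q × [0,1]` over a `(d-1)`-dimensional polytope `Q`, where `T` and `B` are the
faces corresponding to `Q × {1}` and `Q × {0}` respectively, and `T` and `B` are parallel. -/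
def IsPrismatoid (d : ℕ) (P T B : Set (Fin d → ℝ)) : Prop :=
  IsLatticePolytope P ∧ dimSet P = d ∧
    ∃ Q : Set (Fin (d - 1) → ℝ), IsPolytope Q ∧ dimSet Q = d - 1 ∧
      ∃ φ : {F : Set ((Fin (d - 1) → ℝ) × ℝ) // IsFaceOf (Q ×ˢ Set.Icc (0 : ℝ) 1) F} ≃o
            {F : Set (Fin d → ℝ) // IsFaceOf P F},
        (∃ hT : IsFaceOf (Q ×ˢ Set.Icc (0 : ℝ) 1) (Q ×ˢ ({1} : Set ℝ)),
            (φ ⟨Q ×ˢ ({1} : Set ℝ), hT⟩).1 = T) ∧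
        (∃ hB : IsFaceOf (Q ×ˢ Set.Icc (0 : ℝ) 1) (Q ×ˢ ({0} : Set ℝ)),
            (φ ⟨Q ×ˢ ({0} : Set ℝ), hB⟩).1 = B) ∧
        AreParallel T B

/-- The face `F_I^J` of the unit cube given by disjoint index sets `I` (coordinates pinned
to `0`) and `J` (coordinates pinned to `1`). -/
def cubeFace (d : ℕ) (I J : Set (Fin d)) : Set (Fin d → ℝ) :=
  {x ∈ unitCube d | (∀ k ∈ I, x k = 0) ∧ (∀ k ∈ J, x k = 1)}

/-- Under a fixed order isomorphism `φ` from the face poset of the unit cube to the face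
poset of `C`, the set `F` is the face of `C` corresponding to the face `F_I^J` of the
unit cube. -/
def IsCubeFaceImage {d : ℕ} {C : Set (Fin d → ℝ)}
    (φ : {F : Set (Fin d → ℝ) // IsFaceOf (unitCube d) F} ≃o
         {F : Set (Fin d → ℝ) // IsFaceOf C F})
    (I J : Set (Fin d)) (F : Set (Fin d → ℝ)) : Prop :=
  ∃ h : IsFaceOf (unitCube d) (cubeFace d I J), (φ ⟨cubeFace d I J, h⟩).1 = F

/-- The last coordinate index of `Fin d` (for `0 < d`). -/
def lastIdx (d : ℕ) (hd : 0 < d) : Fin d := ⟨d - 1, Nat.sub_lt hd Nat.one_pos⟩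

/-- The linear functional `x ↦ ⟨y, x⟩ = ∑ i, y i * x i` on `ℝ^d`. -/
def dotL {d : ℕ} (y : Fin d → ℝ) : (Fin d → ℝ) →ₗ[ℝ] ℝ :=
  ∑ i, y i • LinearMap.proj (R := ℝ) (φ := fun _ : Fin d => ℝ) i

section PolyAux

open Module Set

variable {d : ℕ}

lemma isFaceOf_subset {P F : Set (Fin d → ℝ)} (h : IsFaceOf P F) : F ⊆ P := by
  obtain ⟨u, rfl⟩ := h; exact fun x hx => hx.1

lemma isFaceOf_self (P : Set (Fin d → ℝ)) : IsFaceOf P P :=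
  ⟨0, by ext x; simp [maxFace]⟩

lemma IsPolytope.isCompact {P : Set (Fin d → ℝ)} (h : IsPolytope P) : IsCompact P := by
  obtain ⟨V, rfl⟩ := h
  exact V.finite_toSet.isCompact_convexHull ℝ

lemma face_nonempty {P F : Set (Fin d → ℝ)} (hP : IsPolytope P) (hne : P.Nonempty)
    (hF : IsFaceOf P F) : F.Nonempty := by
  obtain ⟨u, rfl⟩ := hF
  obtain ⟨x, hx, hmax⟩ := hP.isCompact.exists_isMaxOn hne
    (u.continuous_of_finiteDimensional.continuousOn)
  exact ⟨x, hx, fun y hy => hmax hy⟩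

/-- The level set of a linear functional, as an affine subspace. -/
def levelSet (u : (Fin d → ℝ) →ₗ[ℝ] ℝ) (c : ℝ) : AffineSubspace ℝ (Fin d → ℝ) where
  carrier := {x | u x = c}
  smul_vsub_vadd_mem' := by
    intro t p₁ p₂ p₃ h₁ h₂ h₃
    simp only [Set.mem_setOf_eq] at *
    simp [vsub_eq_sub, vadd_eq_add, map_add, map_smul, map_sub, h₁, h₂, h₃]

lemma mem_levelSet {u : (Fin d → ℝ) →ₗ[ℝ] ℝ} {c : ℝ} {x : Fin d → ℝ} :
    x ∈ levelSet u c ↔ u x = c := Iff.rfl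

lemma subset_face_of_affineSpan_le {P A B : Set (Fin d → ℝ)} (hA : IsFaceOf P A)
    (hAne : A.Nonempty) (hBP : B ⊆ P)
    (hle : affineSpan ℝ B ≤ affineSpan ℝ A) : B ⊆ A := by
  obtain ⟨u, rfl⟩ := hA
  obtain ⟨a, haP, hamax⟩ := hAne
  have hspan : affineSpan ℝ (maxFace P u) ≤ levelSet u (u a) := by
    rw [affineSpan_le]
    intro w hw
    exact le_antisymm (hamax w hw.1) (hw.2 a haP)
  intro b hb
  have hb' : u b = u a := hspan (hle (subset_affineSpan ℝ B hb))
  exact ⟨hBP hb, fun y hy => (hamax y hy).trans hb'.ge⟩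

lemma face_eq_of_affineSpan_eq {P A B : Set (Fin d → ℝ)} (hA : IsFaceOf P A)
    (hB : IsFaceOf P B) (hAne : A.Nonempty) (hBne : B.Nonempty)
    (h : affineSpan ℝ A = affineSpan ℝ B) : A = B :=
  subset_antisymm
    (subset_face_of_affineSpan_le hB hBne (isFaceOf_subset hA) h.le)
    (subset_face_of_affineSpan_le hA hAne (isFaceOf_subset hB) h.ge)

lemma dimSet_lt_of_face_ssubset {P A B : Set (Fin d → ℝ)} (hP : IsPolytope P)
    (hPne : P.Nonempty) (hA : IsFaceOf P A) (hB : IsFaceOf P B) (hss : A ⊂ B) :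
    dimSet A < dimSet B := by
  have hAne := face_nonempty hP hPne hA
  have hBne := face_nonempty hP hPne hB
  have hle : affineSpan ℝ A ≤ affineSpan ℝ B := affineSpan_mono ℝ hss.subset
  have hne : affineSpan ℝ A ≠ affineSpan ℝ B := fun h =>
    hss.ne (face_eq_of_affineSpan_eq hA hB hAne hBne h)
  have hdle : (affineSpan ℝ A).direction ≤ (affineSpan ℝ B).direction :=
    AffineSubspace.direction_le hle
  have hdne : (affineSpan ℝ A).direction ≠ (affineSpan ℝ B).direction := by
    intro h
    obtain ⟨a, ha⟩ := hAne
    exact hne (AffineSubspace.ext_of_direction_eq h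
      ⟨a, subset_affineSpan ℝ A ha, subset_affineSpan ℝ B (hss.subset ha)⟩)
  exact Submodule.finrank_lt_finrank_of_lt (lt_of_le_of_ne hdle hdne)

lemma dir_eq_sup {P F A B : Set (Fin d → ℝ)} (hP : IsPolytope P) (hPne : P.Nonempty)
    (hF : IsFaceOf P F) (hA : IsFaceOf P A) (hB : IsFaceOf P B)
    (hAF : A ⊆ F) (hBF : B ⊆ F) (hAB : A ≠ B) (hcom : (A ∩ B).Nonempty)
    (m : ℕ) (hrA : dimSet A = m + 1) (hrB : dimSet B = m + 1) (hrF : dimSet F = m + 2) :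
    (affineSpan ℝ F).direction = (affineSpan ℝ A).direction ⊔ (affineSpan ℝ B).direction := by
  have hAne := face_nonempty hP hPne hA
  have hBne := face_nonempty hP hPne hB
  set DA := (affineSpan ℝ A).direction
  set DB := (affineSpan ℝ B).direction
  have hdne : DA ≠ DB := by
    intro h
    obtain ⟨p, hpA, hpB⟩ := hcom
    exact hAB (face_eq_of_affineSpan_eq hA hB hAne hBne
      (AffineSubspace.ext_of_direction_eq h
        ⟨p, subset_affineSpan ℝ A hpA, subset_affineSpan ℝ B hpB⟩))
  have hrA' : finrank ℝ DA = m + 1 := hrA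
  have hrB' : finrank ℝ DB = m + 1 := hrB
  have hrF' : finrank ℝ (affineSpan ℝ F).direction = m + 2 := hrF
  have hinf : finrank ℝ (DA ⊓ DB : Submodule ℝ (Fin d → ℝ)) < m + 1 := by
    by_contra hcon
    push_neg at hcon
    have h1 : DA ⊓ DB = DA :=
      Submodule.eq_of_le_of_finrank_le inf_le_left (by omega)
    have h2 : DA = DB :=
      Submodule.eq_of_le_of_finrank_le (h1 ▸ inf_le_right) (by omega)
    exact hdne h2
  have hsum := Submodule.finrank_sup_add_finrank_inf_eq DA DB
  rw [hrA', hrB'] at hsum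
  have hle : DA ⊔ DB ≤ (affineSpan ℝ F).direction :=
    sup_le (AffineSubspace.direction_le (affineSpan_mono ℝ hAF))
      (AffineSubspace.direction_le (affineSpan_mono ℝ hBF))
  exact (Submodule.eq_of_le_of_finrank_le hle (by omega)).symm

end PolyAux
section CubeAux

open Module Set Finset

variable {d : ℕ}

lemma dotL_apply (y w : Fin d → ℝ) : dotL y w = ∑ i, y i * w i := by
  simp [dotL]

/-- The canonical functional vector for a cube face. -/
def cfVec (I J : Set (Fin d)) : Fin d → ℝ := by
  classical exact fun i => if i ∈ J then 1 else if i ∈ I then -1 else 0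

lemma cfVec_term_le {I J : Set (Fin d)} (hIJ : Disjoint I J) {p q : Fin d → ℝ}
    (hp : p ∈ unitCube d) (hq : q ∈ cubeFace d I J) (i : Fin d) :
    cfVec I J i * p i ≤ cfVec I J i * q i := by
  classical
  obtain ⟨hq0, hqI, hqJ⟩ := hq
  simp only [cfVec]
  by_cases hiJ : i ∈ J
  · simp only [hiJ, if_pos, one_mul]
    rw [hqJ i hiJ]
    exact (hp i).2
  · by_cases hiI : i ∈ I
    · simp only [hiJ, if_neg, hiI, if_pos, not_false_iff]
      rw [hqI i hiI]
      have := (hp i).1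
      nlinarith
    · simp [hiJ, hiI]

lemma indicator_mem_cubeFace {I J : Set (Fin d)} (hIJ : Disjoint I J) :
    J.indicator (fun _ => (1:ℝ)) ∈ cubeFace d I J := by
  refine ⟨fun i => ?_, fun k hk => ?_, fun k hk => ?_⟩
  · by_cases h : i ∈ J
    · rw [Set.indicator_of_mem h]; norm_num
    · rw [Set.indicator_of_notMem h]; norm_num
  · exact Set.indicator_of_notMem (fun h => (Set.disjoint_left.mp hIJ hk) h) _
  · exact Set.indicator_of_mem hk _

lemma cubeFace_isFaceOf (I J : Set (Fin d)) (hIJ : Disjoint I J) :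
    IsFaceOf (unitCube d) (cubeFace d I J) := by
  classical
  refine ⟨dotL (cfVec I J), ?_⟩
  ext p
  constructor
  · rintro ⟨hcube, hI, hJ⟩
    exact ⟨hcube, fun w hw => by
      rw [dotL_apply, dotL_apply]
      exact Finset.sum_le_sum fun i _ => cfVec_term_le hIJ hw ⟨hcube, hI, hJ⟩ i⟩
  · rintro ⟨hcube, hmax⟩
    set q : Fin d → ℝ := J.indicator (fun _ => (1:ℝ)) with hqdef
    have hq : q ∈ cubeFace d I J := indicator_mem_cubeFace hIJ
    have hqcube : q ∈ unitCube d := hq.1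
    have hle : ∀ i ∈ Finset.univ, cfVec I J i * p i ≤ cfVec I J i * q i :=
      fun i _ => cfVec_term_le hIJ hcube hq i
    have hsum : ∑ i, cfVec I J i * p i = ∑ i, cfVec I J i * q i := by
      have h1 : dotL (cfVec I J) q ≤ dotL (cfVec I J) p := hmax q hqcube
      rw [dotL_apply, dotL_apply] at h1
      exact le_antisymm (Finset.sum_le_sum hle) h1
    have heach := (Finset.sum_eq_sum_iff_of_le hle).mp hsum
    refine ⟨hcube, fun k hk => ?_, fun k hk => ?_⟩
    · have hkJ : k ∉ J := fun h => (Set.disjoint_left.mp hIJ hk) h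
      have hq0 : q k = 0 := Set.indicator_of_notMem hkJ _
      have := heach k (Finset.mem_univ k)
      simp only [cfVec, hkJ, if_neg, hk, if_pos, not_false_iff, hq0] at this
      linarith
    · have hq1 : q k = 1 := Set.indicator_of_mem hk _
      have := heach k (Finset.mem_univ k)
      simp only [cfVec, hk, if_pos, one_mul, hq1] at this
      exact this

lemma cubeFace_mono {I I' J J' : Set (Fin d)} (hI : I ⊆ I') (hJ : J ⊆ J') :
    cubeFace d I' J' ⊆ cubeFace d I J :=
  fun p hp => ⟨hp.1, fun k hk => hp.2.1 k (hI hk), fun k hk => hp.2.2 k (hJ hk)⟩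

def halfPt (J : Set (Fin d)) (k : Fin d) : Fin d → ℝ :=
  fun i => J.indicator (fun _ => (1:ℝ)) i + if i = k then 1/2 else 0

lemma halfpt_mem_cubeFace {I J : Set (Fin d)} (hIJ : Disjoint I J) {k : Fin d}
    (hkI : k ∉ I) (hkJ : k ∉ J) : halfPt J k ∈ cubeFace d I J := by
  refine ⟨fun i => ?_, fun j hj => ?_, fun j hj => ?_⟩
  · unfold halfPt
    by_cases h : i ∈ J
    · have : i ≠ k := fun he => hkJ (he ▸ h)
      rw [Set.indicator_of_mem h, if_neg this]; norm_num
    · rw [Set.indicator_of_notMem h]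
      by_cases h' : i = k <;> simp [h'] <;> norm_num
  · have h1 : j ∉ J := fun h => (Set.disjoint_left.mp hIJ hj) h
    have h2 : j ≠ k := fun h => hkI (h ▸ hj)
    unfold halfPt
    rw [Set.indicator_of_notMem h1, if_neg h2, add_zero]
  · have h2 : j ≠ k := fun h => hkJ (h ▸ hj)
    unfold halfPt
    rw [Set.indicator_of_mem hj, if_neg h2, add_zero]

lemma halfPt_at_k {J : Set (Fin d)} {k : Fin d} (hkJ : k ∉ J) : halfPt J k k = 1/2 := by
  unfold halfPt
  rw [Set.indicator_of_notMem hkJ, if_pos rfl, zero_add]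

lemma cubeFace_insertI_ssubset {I J : Set (Fin d)} (hIJ : Disjoint I J) {k : Fin d}
    (hkI : k ∉ I) (hkJ : k ∉ J) :
    cubeFace d (insert k I) J ⊂ cubeFace d I J := by
  refine ⟨cubeFace_mono (Set.subset_insert k I) (subset_refl J), fun hcon => ?_⟩
  have hmem := hcon (halfpt_mem_cubeFace hIJ hkI hkJ)
  have h0 := hmem.2.1 k (Set.mem_insert k I)
  rw [halfPt_at_k hkJ] at h0
  norm_num at h0

lemma cubeFace_insertJ_ssubset {I J : Set (Fin d)} (hIJ : Disjoint I J) {k : Fin d}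
    (hkI : k ∉ I) (hkJ : k ∉ J) :
    cubeFace d I (insert k J) ⊂ cubeFace d I J := by
  refine ⟨cubeFace_mono (subset_refl I) (Set.subset_insert k J), fun hcon => ?_⟩
  have hmem := hcon (halfpt_mem_cubeFace hIJ hkI hkJ)
  have h0 := hmem.2.2 k (Set.mem_insert k J)
  rw [halfPt_at_k hkJ] at h0
  norm_num at h0

lemma cubeFace_empty_empty : cubeFace d ∅ ∅ = unitCube d := by
  ext p; simp [cubeFace]

end CubeAux
section TransferAux

open Module Set Finset

variable {d : ℕ} {C : Set (Fin d → ℝ)}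
variable (φ : {F : Set (Fin d → ℝ) // IsFaceOf (unitCube d) F} ≃o
              {F : Set (Fin d → ℝ) // IsFaceOf C F})

lemma phi_mono {a b : {F : Set (Fin d → ℝ) // IsFaceOf (unitCube d) F}}
    (h : a.1 ⊆ b.1) : (φ a).1 ⊆ (φ b).1 :=
  φ.monotone h

lemma phi_ssubset {a b : {F : Set (Fin d → ℝ) // IsFaceOf (unitCube d) F}}
    (h : a.1 ⊂ b.1) : (φ a).1 ⊂ (φ b).1 := by
  have hlt : a < b := lt_of_le_of_ne h.subset (fun he => h.ne (congrArg Subtype.val he))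
  have hlt' : φ a < φ b := φ.lt_iff_lt.mpr hlt
  exact ⟨hlt'.le, fun hc => hlt'.ne (Subtype.ext (subset_antisymm hlt'.le hc))⟩

lemma phi_top : (φ ⟨unitCube d, isFaceOf_self _⟩).1 = C := by
  apply subset_antisymm (isFaceOf_subset (φ _).2)
  have h1 : φ.symm ⟨C, isFaceOf_self C⟩ ≤ ⟨unitCube d, isFaceOf_self _⟩ :=
    isFaceOf_subset (φ.symm ⟨C, isFaceOf_self C⟩).2
  have h2 := φ.monotone h1
  rw [OrderIso.apply_symm_apply] at h2
  exact h2

lemma grade_ub (hCpoly : IsPolytope C) (hCne : C.Nonempty) (hCdim : dimSet C = d) :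
    ∀ n (I J : Finset (Fin d)) (h : Disjoint (↑I : Set (Fin d)) ↑J),
      I.card + J.card = n →
      dimSet (φ ⟨cubeFace d ↑I ↑J, cubeFace_isFaceOf _ _ h⟩).1 + n ≤ d := by
  intro n
  induction n with
  | zero =>
    intro I J h hcard
    have hI : I = ∅ := Finset.card_eq_zero.mp (by omega)
    have hJ : J = ∅ := Finset.card_eq_zero.mp (by omega)
    subst hI; subst hJ
    have hset : cubeFace d (↑(∅ : Finset (Fin d))) (↑(∅ : Finset (Fin d))) = unitCube d := by
      rw [Finset.coe_empty, cubeFace_empty_empty]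
    have heq : (⟨cubeFace d (↑(∅ : Finset (Fin d))) (↑(∅ : Finset (Fin d))),
        cubeFace_isFaceOf _ _ h⟩ : {F : Set (Fin d → ℝ) // IsFaceOf (unitCube d) F}) =
        ⟨unitCube d, isFaceOf_self _⟩ := Subtype.ext hset
    rw [heq, phi_top φ, hCdim]
    omega
  | succ n IH =>
    intro I J h hcard
    rcases I.eq_empty_or_nonempty with hIe | ⟨k, hk⟩
    · have hJne : J.Nonempty := by
        rw [← Finset.card_pos]
        subst hIe
        simp only [Finset.card_empty] at hcard
        omega
      obtain ⟨k, hk⟩ := hJne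
      have hdisj' : Disjoint (↑I : Set (Fin d)) ↑(J.erase k) :=
        Set.disjoint_left.mpr fun a ha hb =>
          Set.disjoint_left.mp h ha (Finset.mem_coe.mpr (Finset.mem_of_mem_erase hb))
      have hcoe : (↑J : Set (Fin d)) = insert k ↑(J.erase k) := by
        rw [← Finset.coe_insert, Finset.insert_erase hk]
      have hss : cubeFace d ↑I ↑J ⊂ cubeFace d ↑I ↑(J.erase k) := by
        rw [hcoe]
        exact cubeFace_insertJ_ssubset hdisj'
          (fun hc => Set.disjoint_left.mp h hc (Finset.mem_coe.mpr hk))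
          (by simp)
      have hstep := dimSet_lt_of_face_ssubset hCpoly hCne
        (φ ⟨cubeFace d ↑I ↑J, cubeFace_isFaceOf _ _ h⟩).2
        (φ ⟨cubeFace d ↑I ↑(J.erase k), cubeFace_isFaceOf _ _ hdisj'⟩).2
        (phi_ssubset φ hss)
      have hJpos : 0 < J.card := Finset.card_pos.mpr ⟨k, hk⟩
      have hIH := IH I (J.erase k) hdisj'
        (by rw [Finset.card_erase_of_mem hk]; omega)
      have hIH2 : dimSet (φ ⟨cubeFace d ↑I ↑(J.erase k),
          cubeFace_isFaceOf _ _ hdisj'⟩).1 + n ≤ d := hIH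
      omega
    · have hdisj' : Disjoint (↑(I.erase k) : Set (Fin d)) ↑J :=
        Set.disjoint_left.mpr fun a ha hb =>
          Set.disjoint_left.mp h (Finset.mem_coe.mpr (Finset.mem_of_mem_erase ha)) hb
      have hcoe : (↑I : Set (Fin d)) = insert k ↑(I.erase k) := by
        rw [← Finset.coe_insert, Finset.insert_erase hk]
      have hss : cubeFace d ↑I ↑J ⊂ cubeFace d ↑(I.erase k) ↑J := by
        rw [hcoe]
        exact cubeFace_insertI_ssubset hdisj' (by simp)
          (fun hc => Set.disjoint_left.mp h (Finset.mem_coe.mpr hk) hc)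
      have hstep := dimSet_lt_of_face_ssubset hCpoly hCne
        (φ ⟨cubeFace d ↑I ↑J, cubeFace_isFaceOf _ _ h⟩).2
        (φ ⟨cubeFace d ↑(I.erase k) ↑J, cubeFace_isFaceOf _ _ hdisj'⟩).2
        (phi_ssubset φ hss)
      have hIpos : 0 < I.card := Finset.card_pos.mpr ⟨k, hk⟩
      have hIH := IH (I.erase k) J hdisj'
        (by rw [Finset.card_erase_of_mem hk]; omega)
      have hIH2 : dimSet (φ ⟨cubeFace d ↑(I.erase k) ↑J,
          cubeFace_isFaceOf _ _ hdisj'⟩).1 + n ≤ d := hIH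
      omega

lemma grade_lb (hCpoly : IsPolytope C) (hCne : C.Nonempty) :
    ∀ m (I J : Finset (Fin d)) (h : Disjoint (↑I : Set (Fin d)) ↑J),
      I.card + J.card + m = d →
      d ≤ dimSet (φ ⟨cubeFace d ↑I ↑J, cubeFace_isFaceOf _ _ h⟩).1 + I.card + J.card := by
  intro m
  induction m with
  | zero => intro I J h hcard; omega
  | succ m IH =>
    intro I J h hcard
    have hex : ∃ k, k ∉ I ∪ J := by
      by_contra hcon
      push_neg at hcon
      have huniv : I ∪ J = Finset.univ := Finset.eq_univ_iff_forall.mpr hcon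
      have hcardu : (I ∪ J).card ≤ I.card + J.card := Finset.card_union_le I J
      rw [huniv, Finset.card_univ, Fintype.card_fin] at hcardu
      omega
    obtain ⟨k, hk⟩ := hex
    have hkI : k ∉ I := fun hc => hk (Finset.mem_union_left J hc)
    have hkJ : k ∉ J := fun hc => hk (Finset.mem_union_right I hc)
    have hdisj' : Disjoint (↑(insert k I) : Set (Fin d)) ↑J := by
      rw [Finset.coe_insert]
      exact Set.disjoint_left.mpr fun a ha hb => by
        rcases Set.mem_insert_iff.mp ha with rfl | ha'
        · exact hkJ (Finset.mem_coe.mp hb)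
        · exact Set.disjoint_left.mp h ha' hb
    have hss : cubeFace d ↑(insert k I) ↑J ⊂ cubeFace d ↑I ↑J := by
      rw [Finset.coe_insert]
      exact cubeFace_insertI_ssubset h (fun hc => hkI (Finset.mem_coe.mp hc))
        (fun hc => hkJ (Finset.mem_coe.mp hc))
    have hstep := dimSet_lt_of_face_ssubset hCpoly hCne
      (φ ⟨cubeFace d ↑(insert k I) ↑J, cubeFace_isFaceOf _ _ hdisj'⟩).2
      (φ ⟨cubeFace d ↑I ↑J, cubeFace_isFaceOf _ _ h⟩).2
      (phi_ssubset φ hss)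
    have hIH := IH (insert k I) J hdisj'
      (by rw [Finset.card_insert_of_notMem hkI]; omega)
    rw [Finset.card_insert_of_notMem hkI] at hIH
    omega

lemma cube_grade_eq (hCpoly : IsPolytope C) (hCne : C.Nonempty) (hCdim : dimSet C = d) (I J : Finset (Fin d)) (h : Disjoint (↑I : Set (Fin d)) ↑J) :
    dimSet (φ ⟨cubeFace d ↑I ↑J, cubeFace_isFaceOf _ _ h⟩).1 + I.card + J.card = d := by
  have hub := grade_ub φ hCpoly hCne hCdim (I.card + J.card) I J h rfl
  have hcards : I.card + J.card ≤ d := by omega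
  have hlb := grade_lb φ hCpoly hCne (d - I.card - J.card) I J h (by omega)
  omega

lemma image_dim (hCpoly : IsPolytope C) (hCne : C.Nonempty) (hCdim : dimSet C = d) {F : Set (Fin d → ℝ)} (I J : Finset (Fin d))
    (h : Disjoint (↑I : Set (Fin d)) ↑J)
    (himg : IsCubeFaceImage φ ↑I ↑J F) :
    dimSet F + I.card + J.card = d := by
  obtain ⟨hface, heq⟩ := himg
  have := cube_grade_eq φ hCpoly hCne hCdim I J h
  rwa [heq] at this

end TransferAux
/-- For a `d`-dimensional smooth combinatorial cube with `d ≥ 3` and distinct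
`x, y, z`, if `F_{xz} ∥ F_{x z̄}` and `F_{yz} ∥ F_{y z̄}`, then `F_z ∥ F_{z̄}`. -/
theorem parallel_codim_two_pairs_give_parallel_facets
    (d : ℕ) (hd : 3 ≤ d) (C : Set (Fin d → ℝ))
    (hC : IsCombinatorialCube d C) (hsmooth : IsSmoothPolytope C)
    (φ : {F : Set (Fin d → ℝ) // IsFaceOf (unitCube d) F} ≃o
         {F : Set (Fin d → ℝ) // IsFaceOf C F})
    (x y z : Fin d) (hxy : x ≠ y) (hxz : x ≠ z) (hyz : y ≠ z)
    (Fxz Fxbz Fyz Fybz Fz Fbz : Set (Fin d → ℝ))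
    (hFxz : IsCubeFaceImage φ {x, z} ∅ Fxz)
    (hFxbz : IsCubeFaceImage φ {x} {z} Fxbz)
    (hFyz : IsCubeFaceImage φ {y, z} ∅ Fyz)
    (hFybz : IsCubeFaceImage φ {y} {z} Fybz)
    (hFz : IsCubeFaceImage φ {z} ∅ Fz)
    (hFbz : IsCubeFaceImage φ ∅ {z} Fbz)
    (h1 : AreParallel Fxz Fxbz) (h2 : AreParallel Fyz Fybz) :
    AreParallel Fz Fbz := by
  classical
  obtain ⟨hlat, hCdim, -⟩ := hC
  have hCpoly : IsPolytope C := by obtain ⟨V, -, hV⟩ := hlat; exact ⟨V, hV⟩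
  have hCne : C.Nonempty := by
    rcases Set.eq_empty_or_nonempty C with h | h
    · exfalso
      rw [h] at hCdim
      have h0 : dimSet (∅ : Set (Fin d → ℝ)) = 0 := by
        unfold dimSet
        rw [AffineSubspace.span_empty, AffineSubspace.direction_bot, finrank_bot]
      omega
    · exact h
  -- dimensions of the six faces
  have hcoe2x : (↑({x, z} : Finset (Fin d)) : Set (Fin d)) = ({x, z} : Set (Fin d)) := by simp
  have hcoe2y : (↑({y, z} : Finset (Fin d)) : Set (Fin d)) = ({y, z} : Set (Fin d)) := by simp
  have hcoe1x : (↑({x} : Finset (Fin d)) : Set (Fin d)) = ({x} : Set (Fin d)) := by simp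
  have hcoe1y : (↑({y} : Finset (Fin d)) : Set (Fin d)) = ({y} : Set (Fin d)) := by simp
  have hcoe1z : (↑({z} : Finset (Fin d)) : Set (Fin d)) = ({z} : Set (Fin d)) := by simp
  have hcoe0 : (↑(∅ : Finset (Fin d)) : Set (Fin d)) = (∅ : Set (Fin d)) := by simp
  have hcard2x : ({x, z} : Finset (Fin d)).card = 2 := by
    rw [Finset.card_insert_of_notMem (by simp [hxz]), Finset.card_singleton]
  have hcard2y : ({y, z} : Finset (Fin d)).card = 2 := by
    rw [Finset.card_insert_of_notMem (by simp [hyz]), Finset.card_singleton]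
  have hdim_xz : dimSet Fxz + 2 = d := by
    have := image_dim φ hCpoly hCne hCdim ({x, z} : Finset (Fin d)) (∅ : Finset (Fin d))
      (by simp) (by rw [hcoe2x, hcoe0]; exact hFxz)
    rwa [hcard2x, Finset.card_empty, add_zero] at this
  have hdim_yz : dimSet Fyz + 2 = d := by
    have := image_dim φ hCpoly hCne hCdim ({y, z} : Finset (Fin d)) (∅ : Finset (Fin d))
      (by simp) (by rw [hcoe2y, hcoe0]; exact hFyz)
    rwa [hcard2y, Finset.card_empty, add_zero] at this
  have hdim_z : dimSet Fz + 1 = d := by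
    have := image_dim φ hCpoly hCne hCdim ({z} : Finset (Fin d)) (∅ : Finset (Fin d))
      (by simp) (by rw [hcoe1z, hcoe0]; exact hFz)
    rwa [Finset.card_singleton, Finset.card_empty, add_zero] at this
  have hdim_xbz : dimSet Fxbz + 2 = d := by
    have := image_dim φ hCpoly hCne hCdim ({x} : Finset (Fin d)) ({z} : Finset (Fin d))
      (by simp [hxz]) (by rw [hcoe1x, hcoe1z]; exact hFxbz)
    rwa [Finset.card_singleton, Finset.card_singleton] at this
  have hdim_ybz : dimSet Fybz + 2 = d := by
    have := image_dim φ hCpoly hCne hCdim ({y} : Finset (Fin d)) ({z} : Finset (Fin d))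
      (by simp [hyz]) (by rw [hcoe1y, hcoe1z]; exact hFybz)
    rwa [Finset.card_singleton, Finset.card_singleton] at this
  have hdim_bz : dimSet Fbz + 1 = d := by
    have := image_dim φ hCpoly hCne hCdim (∅ : Finset (Fin d)) ({z} : Finset (Fin d))
      (by simp) (by rw [hcoe0, hcoe1z]; exact hFbz)
    rwa [Finset.card_singleton, Finset.card_empty, add_zero] at this
  obtain ⟨hf_xz, he_xz⟩ := hFxz
  obtain ⟨hf_yz, he_yz⟩ := hFyz
  obtain ⟨hf_z, he_z⟩ := hFz
  obtain ⟨hf_xbz, he_xbz⟩ := hFxbz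
  obtain ⟨hf_ybz, he_ybz⟩ := hFybz
  obtain ⟨hf_bz, he_bz⟩ := hFbz
  -- faces of C
  have hface_xz : IsFaceOf C Fxz := he_xz ▸ (φ ⟨_, hf_xz⟩).2
  have hface_yz : IsFaceOf C Fyz := he_yz ▸ (φ ⟨_, hf_yz⟩).2
  have hface_z : IsFaceOf C Fz := he_z ▸ (φ ⟨_, hf_z⟩).2
  have hface_xbz : IsFaceOf C Fxbz := he_xbz ▸ (φ ⟨_, hf_xbz⟩).2
  have hface_ybz : IsFaceOf C Fybz := he_ybz ▸ (φ ⟨_, hf_ybz⟩).2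
  have hface_bz : IsFaceOf C Fbz := he_bz ▸ (φ ⟨_, hf_bz⟩).2
  -- inclusions
  have hsub_xz : Fxz ⊆ Fz := by
    rw [← he_xz, ← he_z]
    exact phi_mono φ (cubeFace_mono (by intro a ha; simp at ha ⊢; tauto)
      (subset_refl (∅ : Set (Fin d))))
  have hsub_yz : Fyz ⊆ Fz := by
    rw [← he_yz, ← he_z]
    exact phi_mono φ (cubeFace_mono (by intro a ha; simp at ha ⊢; tauto)
      (subset_refl (∅ : Set (Fin d))))
  have hsub_xbz : Fxbz ⊆ Fbz := by
    rw [← he_xbz, ← he_bz]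
    exact phi_mono φ (cubeFace_mono (Set.empty_subset _) (subset_refl ({z} : Set (Fin d))))
  have hsub_ybz : Fybz ⊆ Fbz := by
    rw [← he_ybz, ← he_bz]
    exact phi_mono φ (cubeFace_mono (Set.empty_subset _) (subset_refl ({z} : Set (Fin d))))
  -- common points
  have hf3 : IsFaceOf (unitCube d) (cubeFace d ({x, y, z} : Set (Fin d)) ∅) :=
    cubeFace_isFaceOf _ _ (by simp)
  have hcom1 : (Fxz ∩ Fyz).Nonempty := by
    obtain ⟨p, hp⟩ := face_nonempty hCpoly hCne (φ ⟨_, hf3⟩).2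
    refine ⟨p, ?_, ?_⟩
    · rw [← he_xz]
      exact phi_mono φ (cubeFace_mono (by intro a ha; simp at ha ⊢; tauto)
        (subset_refl (∅ : Set (Fin d)))) hp
    · rw [← he_yz]
      exact phi_mono φ (cubeFace_mono (by intro a ha; simp at ha ⊢; tauto)
        (subset_refl (∅ : Set (Fin d)))) hp
  have hf3b : IsFaceOf (unitCube d) (cubeFace d ({x, y} : Set (Fin d)) ({z} : Set (Fin d))) :=
    cubeFace_isFaceOf _ _ (by
      simp only [Set.disjoint_singleton_right, Set.mem_insert_iff, Set.mem_singleton_iff]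
      push_neg
      exact ⟨fun h => hxz h.symm, fun h => hyz h.symm⟩)
  have hcom2 : (Fxbz ∩ Fybz).Nonempty := by
    obtain ⟨p, hp⟩ := face_nonempty hCpoly hCne (φ ⟨_, hf3b⟩).2
    refine ⟨p, ?_, ?_⟩
    · rw [← he_xbz]
      exact phi_mono φ (cubeFace_mono (by intro a ha; simp at ha ⊢; tauto)
        (subset_refl ({z} : Set (Fin d)))) hp
    · rw [← he_ybz]
      exact phi_mono φ (cubeFace_mono (by intro a ha; simp at ha ⊢; tauto)
        (subset_refl ({z} : Set (Fin d)))) hp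
  -- distinctness
  have hne1 : Fxz ≠ Fyz := by
    intro he
    have hsetne : cubeFace d ({x, z} : Set (Fin d)) ∅ ≠ cubeFace d ({y, z} : Set (Fin d)) ∅ := by
      intro hce
      have hmem : halfPt (∅ : Set (Fin d)) x ∈ cubeFace d ({y, z} : Set (Fin d)) ∅ :=
        halfpt_mem_cubeFace (by simp) (by simp [hxy, hxz]) (by simp)
      rw [← hce] at hmem
      have h0 := hmem.2.1 x (by simp)
      rw [halfPt_at_k (by simp)] at h0
      norm_num at h0
    have hsub : (⟨cubeFace d {x, z} ∅, hf_xz⟩ : {F : Set (Fin d → ℝ) // IsFaceOf (unitCube d) F}) =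
        ⟨cubeFace d {y, z} ∅, hf_yz⟩ :=
      φ.injective (Subtype.ext (show (φ ⟨cubeFace d {x, z} ∅, hf_xz⟩).1 =
        (φ ⟨cubeFace d {y, z} ∅, hf_yz⟩).1 by rw [he_xz, he_yz, he]))
    exact hsetne (congrArg Subtype.val hsub)
  have hne2 : Fxbz ≠ Fybz := by
    intro he
    have hsetne : cubeFace d ({x} : Set (Fin d)) ({z} : Set (Fin d)) ≠
        cubeFace d ({y} : Set (Fin d)) ({z} : Set (Fin d)) := by
      intro hce
      have hmem : halfPt ({z} : Set (Fin d)) x ∈ cubeFace d ({y} : Set (Fin d)) ({z} : Set (Fin d)) :=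
        halfpt_mem_cubeFace (by simp [hyz]) (by simp [hxy]) (by simp [hxz])
      rw [← hce] at hmem
      have h0 := hmem.2.1 x (by simp)
      rw [halfPt_at_k (by simp [hxz])] at h0
      norm_num at h0
    have hsub : (⟨cubeFace d {x} {z}, hf_xbz⟩ : {F : Set (Fin d → ℝ) // IsFaceOf (unitCube d) F}) =
        ⟨cubeFace d {y} {z}, hf_ybz⟩ :=
      φ.injective (Subtype.ext (show (φ ⟨cubeFace d {x} {z}, hf_xbz⟩).1 =
        (φ ⟨cubeFace d {y} {z}, hf_ybz⟩).1 by rw [he_xbz, he_ybz, he]))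
    exact hsetne (congrArg Subtype.val hsub)
  -- assemble
  have e1 : (affineSpan ℝ Fz).direction =
      (affineSpan ℝ Fxz).direction ⊔ (affineSpan ℝ Fyz).direction :=
    dir_eq_sup hCpoly hCne hface_z hface_xz hface_yz hsub_xz hsub_yz hne1 hcom1 (d - 3)
      (by omega) (by omega) (by omega)
  have e2 : (affineSpan ℝ Fbz).direction =
      (affineSpan ℝ Fxbz).direction ⊔ (affineSpan ℝ Fybz).direction :=
    dir_eq_sup hCpoly hCne hface_bz hface_xbz hface_ybz hsub_xbz hsub_ybz hne2 hcom2 (d - 3)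
      (by omega) (by omega) (by omega)
  have h1' : (affineSpan ℝ Fxz).direction = (affineSpan ℝ Fxbz).direction := h1
  have h2' : (affineSpan ℝ Fyz).direction = (affineSpan ℝ Fybz).direction := h2
  show (affineSpan ℝ Fz).direction = (affineSpan ℝ Fbz).direction
  rw [e1, e2, h1', h2']
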